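/- arXiv:2501.14281 — 2 statements merged into one kernel-verified Lean document; each statement's English description precedes it below -/
import Mathlib

section
/- Let d ∈ ℕ, s := s(n,d), and let y* = (y*_α)_{α ∈ ℕ^n_{2d}} be a real sequence whose pseudo-moment matrix M_d(y*) is symmetric positive semidefinite with spectral decomposition M_d(y*) = P E Pᵀ, where P is an orthogonal matrix whose columns p_1,…,p_s are interpreted as coefficient vectors of polynomials p_1,…,p_s of degree at most d, and E is the diagonal matrix of eigenvalues e_1 ≥ ⋯ ≥ e_s ≥ 0. Let r be the number of zero eigenvalues and let β > 0. Then the Riesz functional of y* applied to the regularized Christoffel polynomial Λ̃_d^{y*} := Σ_{i=1}^{s} p_i²/(e_i + β) satisfies L_{y*}(Λ̃_d^{y*}) = Σ_{i=1}^{s−r} e_i/(e_i + β). -/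
open Matrix MvPolynomial

/-- The index set `ℕ^n_e` of multi-indices `α ∈ ℕ^n` with `|α| ≤ e`, as a finite type. -/
abbrev momIdx (n e : ℕ) := {α : Fin n → Fin (e + 1) // ∑ i, (α i : ℕ) ≤ e}

/-- The monomial `x^α` attached to an index `α ∈ ℕ^n_e`. -/
noncomputable def momMono {n e : ℕ} (a : momIdx n e) : MvPolynomial (Fin n) ℝ :=
  MvPolynomial.monomial (Finsupp.equivFunOnFinite.symm fun i => ((a.1 i : ℕ))) 1

/-- The Riesz functional `L_y` of a sequence `y`: `q = Σ_α q_α x^α ↦ Σ_α q_α y_α`. -/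
noncomputable def riesz {n : ℕ} (y : (Fin n → ℕ) → ℝ)
    (q : MvPolynomial (Fin n) ℝ) : ℝ :=
  ∑ α ∈ q.support, q.coeff α * y (fun i => α i)

lemma riesz_eq_sum_subset {n : ℕ} (y : (Fin n → ℕ) → ℝ) (q : MvPolynomial (Fin n) ℝ)
    (s : Finset (Fin n →₀ ℕ)) (hs : q.support ⊆ s) :
    riesz y q = ∑ α ∈ s, q.coeff α * y (fun i => α i) := by
  refine Finset.sum_subset hs ?_
  intro x _ hx
  simp [MvPolynomial.notMem_support_iff.mp hx]

lemma riesz_add {n : ℕ} (y : (Fin n → ℕ) → ℝ) (p q : MvPolynomial (Fin n) ℝ) :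
    riesz y (p + q) = riesz y p + riesz y q := by
  rw [riesz_eq_sum_subset y (p + q) (p.support ∪ q.support)
      (MvPolynomial.support_add),
    riesz_eq_sum_subset y p (p.support ∪ q.support) Finset.subset_union_left,
    riesz_eq_sum_subset y q (p.support ∪ q.support) Finset.subset_union_right,
    ← Finset.sum_add_distrib]
  simp [add_mul]

lemma riesz_sum {n : ℕ} (y : (Fin n → ℕ) → ℝ) {ι : Type*} (t : Finset ι)
    (f : ι → MvPolynomial (Fin n) ℝ) :
    riesz y (∑ i ∈ t, f i) = ∑ i ∈ t, riesz y (f i) := by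
  classical
  induction t using Finset.induction_on with
  | empty => simp [riesz]
  | insert a s h ih => simp [Finset.sum_insert h, riesz_add, ih]

lemma riesz_monomial {n : ℕ} (y : (Fin n → ℕ) → ℝ) (m : Fin n →₀ ℕ) (c : ℝ) :
    riesz y (MvPolynomial.monomial m c) = c * y (fun i => m i) := by
  rcases eq_or_ne c 0 with h | h
  · simp [riesz, h]
  · simp [riesz, MvPolynomial.support_monomial, h]

/-- Let `y*` be a real sequence whose pseudo-moment matrix `M_d(y*)` is
symmetric positive semidefinite with spectral decomposition `M_d(y*) = P E Pᵀ`, where `P`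
is orthogonal with columns interpreted as coefficient vectors of polynomials `p_i` of
degree at most `d`, and `E = diag(e)` with eigenvalues `e_i ≥ 0`, of which `r` vanish.
For `β > 0`, the Riesz functional of `y*` applied to the regularized Christoffel
polynomial `Λ̃_d^{y*} := Σ_i p_i²/(e_i + β)` satisfies
`L_{y*}(Λ̃_d^{y*}) = Σ_{i : e_i ≠ 0} e_i/(e_i + β)` — a sum over the `s − r` nonzero
eigenvalues. -/
theorem stmt_10 {n d : ℕ} (β : ℝ) (hβ : 0 < β)
    (y : (Fin n → ℕ) → ℝ)
    (M : Matrix (momIdx n d) (momIdx n d) ℝ)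
    (hM : ∀ a b : momIdx n d, M a b = y (fun i => (a.1 i : ℕ) + (b.1 i : ℕ)))
    (hMpsd : M.PosSemidef)
    (P : Matrix (momIdx n d) (momIdx n d) ℝ) (e : momIdx n d → ℝ)
    (hP : Pᵀ * P = 1) (hspec : M = P * Matrix.diagonal e * Pᵀ)
    (he : ∀ i, 0 ≤ e i)
    (r : ℕ) (hr : r = (Finset.univ.filter fun i : momIdx n d => e i = 0).card) :
    riesz y (∑ i : momIdx n d, MvPolynomial.C (1 / (e i + β)) *
        (∑ a : momIdx n d, MvPolynomial.C (P a i) * momMono a) ^ 2) =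
      ∑ i ∈ Finset.univ.filter (fun i : momIdx n d => e i ≠ 0), e i / (e i + β) ∧
    (Finset.univ.filter fun i : momIdx n d => e i ≠ 0).card =
      Fintype.card (momIdx n d) - r := by
  constructor
  · have hterm : ∀ i : momIdx n d,
        MvPolynomial.C (1 / (e i + β)) *
          (∑ a : momIdx n d, MvPolynomial.C (P a i) * momMono a) ^ 2 =
        ∑ a : momIdx n d, ∑ b : momIdx n d,
          MvPolynomial.monomial
            (Finsupp.equivFunOnFinite.symm (fun j => ((a.1 j : ℕ))) +
             Finsupp.equivFunOnFinite.symm (fun j => ((b.1 j : ℕ))))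
            ((1 / (e i + β)) * (P a i * P b i)) := by
      intro i
      rw [sq, Finset.sum_mul_sum, Finset.mul_sum]
      refine Finset.sum_congr rfl fun a _ => ?_
      rw [Finset.mul_sum]
      refine Finset.sum_congr rfl fun b _ => ?_
      simp only [momMono]
      rw [MvPolynomial.C_mul_monomial, MvPolynomial.C_mul_monomial,
        MvPolynomial.monomial_mul, MvPolynomial.C_mul_monomial]
      ring_nf
    have key : ∀ i : momIdx n d,
        riesz y (MvPolynomial.C (1 / (e i + β)) *
          (∑ a : momIdx n d, MvPolynomial.C (P a i) * momMono a) ^ 2) =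
        (1 / (e i + β)) * e i := by
      intro i
      rw [hterm i, riesz_sum]
      have : ∀ a : momIdx n d,
          riesz y (∑ b : momIdx n d,
            MvPolynomial.monomial
              (Finsupp.equivFunOnFinite.symm (fun j => ((a.1 j : ℕ))) +
               Finsupp.equivFunOnFinite.symm (fun j => ((b.1 j : ℕ))))
              ((1 / (e i + β)) * (P a i * P b i))) =
          ∑ b : momIdx n d, (1 / (e i + β)) * (P a i * M a b * P b i) := by
        intro a
        rw [riesz_sum]
        refine Finset.sum_congr rfl fun b _ => ?_
        rw [riesz_monomial]
        have : y (fun j =>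
            ((Finsupp.equivFunOnFinite.symm (fun j => ((a.1 j : ℕ))) +
              Finsupp.equivFunOnFinite.symm (fun j => ((b.1 j : ℕ)))) j)) = M a b := by
          rw [hM a b]
          congr 1
        rw [this]; ring
      simp_rw [this, ← Finset.mul_sum]
      congr 1
      have hD : Pᵀ * M * P = Matrix.diagonal e := by
        rw [hspec]
        calc Pᵀ * (P * Matrix.diagonal e * Pᵀ) * P
            = (Pᵀ * P) * Matrix.diagonal e * (Pᵀ * P) := by
              simp only [Matrix.mul_assoc]
          _ = Matrix.diagonal e := by rw [hP]; simp
      have := congrArg (fun A => A i i) hD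
      simp only [Matrix.diagonal_apply_eq] at this
      rw [← this]
      simp only [Matrix.mul_apply, Matrix.transpose_apply, Finset.sum_mul]
      rw [Finset.sum_comm]
    rw [riesz_sum]
    simp_rw [key]
    rw [← Finset.sum_filter_of_ne (p := fun i => e i ≠ 0)
      (f := fun i => 1 / (e i + β) * e i)]
    · refine Finset.sum_congr rfl fun i _ => ?_
      field_simp
    · intro i _ h hei
      exact h (by rw [hei, mul_zero])
  · have h := Finset.card_filter_add_card_filter_not
      (s := (Finset.univ : Finset (momIdx n d))) (p := fun i => e i = 0)
    simp only [Finset.card_univ] at h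
    simp only [ne_eq]
    omega
end

section
/- Let y* = (y*_α)_{α ∈ ℕ^n_2} with y*_0 = 1 be such that the matrix M_1(y*) ∈ S_+^{n+1} is invertible (hence positive definite), and define x̂ := (L_{y*}(x_1), …, L_{y*}(x_n)) ∈ ℝ^n. Then the Christoffel polynomial Λ_1^{y*}(x) := v_1(x)ᵀ M_1(y*)^{-1} v_1(x), where v_1(x) = (1, x_1, …, x_n), satisfies min_{x ∈ ℝ^n} Λ_1^{y*}(x) = 1 and the minimum is attained at x̂, i.e., Λ_1^{y*}(x̂) = 1 and Λ_1^{y*}(x) ≥ 1 for all x ∈ ℝ^n. -/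
open Matrix

/-- The multi-index in `ℕ^n_1` attached to `a : Fin (n+1)`: the zero multi-index for
`a = 0`, and the `i`-th unit multi-index (the exponent of the monomial `x_i`) for
`a = i.succ`.  With this indexing, `M_1(y)(a, b) = y_{α(a) + α(b)}`. -/
def unitIdx {n : ℕ} (a : Fin (n + 1)) : Fin n → ℕ :=
  fun i => if a = i.succ then 1 else 0

/-- Let `y*` (with `y*_0 = 1`) be such that the pseudo-moment matrix
`M_1(y*) ∈ S_+^{n+1}` is invertible (hence positive definite), and define
`x̂ := (L_{y*}(x_1), …, L_{y*}(x_n))`.  Then the first-order Christoffel polynomial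
`Λ_1^{y*}(x) := v_1(x)ᵀ M_1(y*)⁻¹ v_1(x)`, with `v_1(x) = (1, x_1, …, x_n)`, satisfies
`Λ_1^{y*}(x̂) = 1` and `Λ_1^{y*}(x) ≥ 1` for all `x ∈ ℝ^n`; that is,
`min_{x ∈ ℝ^n} Λ_1^{y*}(x) = 1`, attained at `x̂`. -/
theorem stmt_11 {n : ℕ} (y : (Fin n → ℕ) → ℝ)
    (hy0 : y (fun _ => 0) = 1)
    (M : Matrix (Fin (n + 1)) (Fin (n + 1)) ℝ)
    (hM : ∀ a b, M a b = y (fun i => unitIdx a i + unitIdx b i))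
    (hpsd : M.PosSemidef) (hinv : IsUnit M.det) :
    (Fin.cons 1 (fun i : Fin n => y (unitIdx i.succ)) ⬝ᵥ
      (M⁻¹).mulVec (Fin.cons 1 fun i : Fin n => y (unitIdx i.succ))) = 1 ∧
    ∀ x : Fin n → ℝ,
      1 ≤ Fin.cons 1 x ⬝ᵥ (M⁻¹).mulVec (Fin.cons 1 x) := by
  set v : Fin (n + 1) → ℝ := Fin.cons 1 (fun i : Fin n => y (unitIdx i.succ)) with hv
  set e : Fin (n + 1) → ℝ := Pi.single 0 1 with he
  have hidx0 : unitIdx (0 : Fin (n + 1)) = fun _ => 0 := by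
    funext i
    simp [unitIdx, (Fin.succ_ne_zero i).symm]
  have hve : v = M *ᵥ e := by
    funext a
    have : (M *ᵥ e) a = M a 0 := by simp [he, mulVec_single]
    rw [this, hM]
    induction a using Fin.cases with
    | zero =>
      have : (fun i => unitIdx (0 : Fin (n+1)) i + unitIdx (0 : Fin (n+1)) i)
          = (fun _ : Fin n => 0) := by
        funext i; simp [hidx0]
      rw [this, hy0]; simp [hv]
    | succ j =>
      have : (fun i => unitIdx (j.succ : Fin (n+1)) i + unitIdx (0 : Fin (n+1)) i)
          = unitIdx j.succ := by
        funext i; simp [hidx0]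
      rw [this]; simp [hv]
  have hMinv : M⁻¹ *ᵥ v = e := by
    rw [hve, mulVec_mulVec, Matrix.nonsing_inv_mul M hinv, one_mulVec]
  have hpart1 : v ⬝ᵥ M⁻¹ *ᵥ v = 1 := by
    rw [hMinv, he, dotProduct_single, mul_one, hv]
    simp
  refine ⟨hpart1, ?_⟩
  intro x
  set u : Fin (n + 1) → ℝ := Fin.cons 1 x with hu
  have hinvpsd : (M⁻¹).PosSemidef := hpsd.inv
  have hnn : 0 ≤ (u - v) ⬝ᵥ M⁻¹ *ᵥ (u - v) := by
    simpa using hinvpsd.dotProduct_mulVec_nonneg (u - v)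
  have hsymm : (M⁻¹).IsHermitian := hinvpsd.1
  -- v ⬝ᵥ M⁻¹ *ᵥ u = e ⬝ᵥ u = 1
  have hvu : v ⬝ᵥ M⁻¹ *ᵥ u = 1 := by
    have : v ⬝ᵥ M⁻¹ *ᵥ u = ((M⁻¹)ᵀ *ᵥ v) ⬝ᵥ u := by
      rw [dotProduct_mulVec, ← mulVec_transpose]
    rw [this]
    have ht : (M⁻¹)ᵀ = M⁻¹ := by
      have := hsymm; rwa [IsHermitian, conjTranspose_eq_transpose_of_trivial] at this
    rw [ht, hMinv, he, single_dotProduct, one_mul, hu]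
    simp
  have huv : u ⬝ᵥ M⁻¹ *ᵥ v = 1 := by
    rw [hMinv, he, dotProduct_single, mul_one, hu]
    simp
  have hexp : (u - v) ⬝ᵥ M⁻¹ *ᵥ (u - v)
      = u ⬝ᵥ M⁻¹ *ᵥ u - u ⬝ᵥ M⁻¹ *ᵥ v - v ⬝ᵥ M⁻¹ *ᵥ u + v ⬝ᵥ M⁻¹ *ᵥ v := by
    rw [mulVec_sub, sub_dotProduct, dotProduct_sub, dotProduct_sub]
    ring
  rw [hexp, huv, hvu, hpart1] at hnn
  linarith
end
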